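/- The map M ↦ M_B is a bijection between the set of real maximal ideals of C(X) and the set of real maximal ideals of B₁(X). -/

import Mathlib

open Filter Topology

def CFun (X : Type*) [TopologicalSpace X] : Subring (X → ℝ) where
  carrier := {f | Continuous f}
  one_mem' := continuous_const
  zero_mem' := continuous_const
  add_mem' := fun hf hg => hf.add hg
  mul_mem' := fun hf hg => hf.mul hg
  neg_mem' := fun hf => hf.neg

def B1 (X : Type*) [TopologicalSpace X] : Subring (X → ℝ) where
  carrier := {f | ∃ u : ℕ → C(X, ℝ), ∀ x, Tendsto (fun n => u n x) atTop (𝓝 (f x))}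
  one_mem' := ⟨fun _ => 1, fun _ => tendsto_const_nhds⟩
  zero_mem' := ⟨fun _ => 0, fun _ => tendsto_const_nhds⟩
  add_mem' := by
    rintro f g ⟨u, hu⟩ ⟨v, hv⟩
    exact ⟨fun n => u n + v n, fun x => (hu x).add (hv x)⟩
  mul_mem' := by
    rintro f g ⟨u, hu⟩ ⟨v, hv⟩
    exact ⟨fun n => u n * v n, fun x => (hu x).mul (hv x)⟩
  neg_mem' := by
    rintro f ⟨u, hu⟩
    exact ⟨fun n => -u n, fun x => (hu x).neg⟩

theorem CFun_le_B1 (X : Type*) [TopologicalSpace X] : CFun X ≤ B1 X :=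
  fun f hf => ⟨fun _ => ⟨f, hf⟩, fun _ => tendsto_const_nhds⟩

def inclB (X : Type*) [TopologicalSpace X] : CFun X →+* B1 X :=
  Subring.inclusion (CFun_le_B1 X)

def idealB {X : Type*} [TopologicalSpace X] (I : Ideal (CFun X)) : Set (B1 X) :=
  {f | ∃ u : ℕ → CFun X, (∀ n, u n ∈ I) ∧
    ∀ x, Tendsto (fun n => (u n : X → ℝ) x) atTop (𝓝 ((f : X → ℝ) x))}

def IsRealMax {X : Type*} [TopologicalSpace X] (M : Ideal (CFun X)) : Prop :=
  M.IsMaximal ∧ Nonempty ((CFun X ⧸ M) ≃+* ℝ)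

def IsRealMaxB {X : Type*} [TopologicalSpace X] (M : Ideal (B1 X)) : Prop :=
  M.IsMaximal ∧ Nonempty ((B1 X ⧸ M) ≃+* ℝ)

def evalC {X : Type*} [TopologicalSpace X] (p : X) : CFun X →+* ℝ :=
  (Pi.evalRingHom (fun _ => ℝ) p).comp (CFun X).subtype

def evalB {X : Type*} [TopologicalSpace X] (p : X) : B1 X →+* ℝ :=
  (Pi.evalRingHom (fun _ => ℝ) p).comp (B1 X).subtype

def constB1 {X : Type*} [TopologicalSpace X] (r : ℝ) : B1 X :=
  ⟨fun _ => r, ⟨fun _ => ContinuousMap.const X r, fun _ => tendsto_const_nhds⟩⟩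

set_option linter.unusedSectionVars false

namespace RealMaxProof

variable {X : Type*} [TopologicalSpace X]


variable {X : Type*} [TopologicalSpace X]

/-- Closure properties shared by `CFun X` and `B1 X`. -/
structure Nice (R : Subring (X → ℝ)) : Prop where
  const_mem : ∀ r : ℝ, (fun _ : X => r) ∈ R
  abs_mem : ∀ f : X → ℝ, f ∈ R → (fun x => |f x|) ∈ R
  sqrt_mem : ∀ f : X → ℝ, f ∈ R → (∀ x, 0 ≤ f x) → ∃ g ∈ R, (fun x => g x * g x) = f
  series_mem : ∀ (w : ℕ → (X → ℝ)) (C : ℝ), (∀ k, w k ∈ R) → (∀ k x, 0 ≤ w k x) →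
    (∀ k x, w k x ≤ C) → (fun x => ∑' k, (1/2:ℝ)^k * w k x) ∈ R
  inv_mem : ∀ f : X → ℝ, f ∈ R → (∀ x, f x ≠ 0) → ∃ g ∈ R, (fun x => f x * g x) = fun _ => 1

variable {R : Subring (X → ℝ)}

def cR (hR : Nice R) (r : ℝ) : R := ⟨fun _ => r, hR.const_mem r⟩

def constHom (hR : Nice R) : ℝ →+* R where
  toFun := cR hR
  map_one' := rfl
  map_mul' := fun _ _ => rfl
  map_zero' := rfl
  map_add' := fun _ _ => rfl

lemma φ_const (hR : Nice R) (φ : R →+* ℝ) (r : ℝ) : φ (cR hR r) = r := by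
  have h : φ.comp (constHom hR) = RingHom.id ℝ := Subsingleton.elim _ _
  exact RingHom.congr_fun h r

lemma φ_nonneg (hR : Nice R) (φ : R →+* ℝ) (f : R) (h : ∀ x, 0 ≤ (f : X → ℝ) x) :
    0 ≤ φ f := by
  obtain ⟨g, hg, hgg⟩ := hR.sqrt_mem f f.2 h
  have : (⟨g, hg⟩ : R) * ⟨g, hg⟩ = f := Subtype.ext (by
    ext x
    simpa using congrFun hgg x)
  calc (0:ℝ) ≤ φ ⟨g, hg⟩ * φ ⟨g, hg⟩ := mul_self_nonneg _
  _ = φ f := by rw [← map_mul, this]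

lemma φ_mono (hR : Nice R) (φ : R →+* ℝ) (f g : R)
    (h : ∀ x, (f : X → ℝ) x ≤ (g : X → ℝ) x) : φ f ≤ φ g := by
  have := φ_nonneg hR φ (g - f) (fun x => by
    have : ((g - f : R) : X → ℝ) x = (g : X → ℝ) x - (f : X → ℝ) x := rfl
    rw [this]; linarith [h x])
  rw [map_sub] at this; linarith

def absR (hR : Nice R) (f : R) : R := ⟨fun x => |(f : X → ℝ) x|, hR.abs_mem _ f.2⟩

lemma φ_abs (hR : Nice R) (φ : R →+* ℝ) (f : R) : φ (absR hR f) = |φ f| := by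
  have hsq : absR hR f * absR hR f = f * f := Subtype.ext (by
    ext x
    exact abs_mul_abs_self _)
  have h1 : φ (absR hR f) * φ (absR hR f) = φ f * φ f := by
    rw [← map_mul, ← map_mul, hsq]
  have h2 : 0 ≤ φ (absR hR f) := φ_nonneg hR φ _ (fun x => abs_nonneg _)
  refine (mul_self_inj h2 (abs_nonneg _)).mp ?_
  rw [abs_mul_abs_self]; exact h1

def minCR (hR : Nice R) (f : R) (c : ℝ) : R :=
  ⟨fun x => min ((f : X → ℝ) x) c, by
    have : (fun x => min ((f : X → ℝ) x) c) =
        fun x => ((f : X → ℝ) x + c - |(f : X → ℝ) x - c|) * (1/2) := by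
      ext x
      rcases le_total ((f : X → ℝ) x) c with h | h
      · rw [min_eq_left h, abs_of_nonpos (by linarith)]; ring
      · rw [min_eq_right h, abs_of_nonneg (by linarith)]; ring
    rw [this]
    exact R.mul_mem (R.sub_mem (R.add_mem f.2 (hR.const_mem c))
      (hR.abs_mem _ (R.sub_mem f.2 (hR.const_mem c)))) (hR.const_mem (1/2))⟩

lemma minCR_coe (hR : Nice R) (f : R) (c : ℝ) (x : X) :
    ((minCR hR f c : R) : X → ℝ) x = min ((f : X → ℝ) x) c := rfl

lemma φ_minC (hR : Nice R) (φ : R →+* ℝ) (f : R) (c : ℝ) :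
    φ (minCR hR f c) = min (φ f) c := by
  have h1 : minCR hR f c = (f + cR hR c - absR hR (f - cR hR c)) * cR hR (1/2) := by
    apply Subtype.ext
    ext x
    show min ((f : X → ℝ) x) c = ((f : X → ℝ) x + c - |(f : X → ℝ) x - c|) * (1/2)
    rcases le_total ((f : X → ℝ) x) c with h | h
    · rw [min_eq_left h, abs_of_nonpos (by linarith)]; ring
    · rw [min_eq_right h, abs_of_nonneg (by linarith)]; ring
  have h2 : φ (absR hR (f - cR hR c)) = |φ f - c| := by
    rw [φ_abs hR φ, map_sub, φ_const]
  rw [h1, map_mul, map_sub, map_add, φ_const, φ_const, h2]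
  rcases le_total (φ f) c with h | h
  · rw [min_eq_left h, abs_of_nonpos (by linarith)]; ring
  · rw [min_eq_right h, abs_of_nonneg (by linarith)]; ring

/-- The key lemma: a real-valued ring homomorphism on a nice subring of functions sends
pointwise-null sequences to null sequences. -/
lemma key (hR : Nice R) (φ : R →+* ℝ) (v : ℕ → R)
    (hv : ∀ x, Tendsto (fun n => ((v n : X → ℝ)) x) atTop (𝓝 0)) :
    Tendsto (fun n => φ (v n)) atTop (𝓝 0) := by
  by_contra hcon
  rw [Metric.tendsto_atTop] at hcon
  push_neg at hcon
  obtain ⟨ε, hε, hfreq⟩ := hcon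
  have hfreq' : ∃ᶠ n in atTop, ε ≤ |φ (v n)| := by
    rw [frequently_atTop]
    intro N
    obtain ⟨n, hn, h⟩ := hfreq N
    exact ⟨n, hn, by simpa [Real.dist_eq] using h⟩
  obtain ⟨s, hs_mono, hs⟩ := extraction_of_frequently_atTop hfreq'
  -- truncated squares
  set q : ℕ → R := fun k => minCR hR (v (s k) * v (s k)) (ε^2) with hq
  have hq_coe : ∀ k x, ((q k : R) : X → ℝ) x = min (((v (s k) : X → ℝ)) x * ((v (s k) : X → ℝ)) x) (ε^2) := by
    intro k x; rfl
  have hq_nonneg : ∀ k x, 0 ≤ ((q k : R) : X → ℝ) x := by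
    intro k x
    rw [hq_coe]
    exact le_min (mul_self_nonneg _) (by positivity)
  have hq_le : ∀ k x, ((q k : R) : X → ℝ) x ≤ ε^2 := by
    intro k x; rw [hq_coe]; exact min_le_right _ _
  have hφq : ∀ k, φ (q k) = ε^2 := by
    intro k
    rw [hq, φ_minC hR φ, map_mul]
    have : ε^2 ≤ φ (v (s k)) * φ (v (s k)) := by
      have := hs k
      nlinarith [abs_nonneg (φ (v (s k))), sq_abs (φ (v (s k))), hs k]
    exact min_eq_right this
  have hq_tendsto : ∀ x, Tendsto (fun k => ((q k : R) : X → ℝ) x) atTop (𝓝 0) := by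
    intro x
    have h1 : Tendsto (fun k => ((v (s k) : X → ℝ)) x) atTop (𝓝 0) :=
      (hv x).comp hs_mono.tendsto_atTop
    have h2 : Tendsto (fun k => ((v (s k) : X → ℝ)) x * ((v (s k) : X → ℝ)) x) atTop (𝓝 0) := by
      simpa using h1.mul h1
    have h3 := h2.min (tendsto_const_nhds (x := ε^2))
    rw [min_eq_left (by positivity)] at h3
    exact h3
  -- the series
  have hsum : ∀ x, Summable (fun k => (1/2:ℝ)^k * ((q k : R) : X → ℝ) x) := by
    intro x
    apply Summable.of_nonneg_of_le
      (fun k => mul_nonneg (by positivity) (hq_nonneg k x))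
      (fun k => mul_le_mul_of_nonneg_left (hq_le k x) (by positivity))
    exact (summable_geometric_of_lt_one (by norm_num) (by norm_num)).mul_right _
  set g : R := ⟨fun x => ∑' k, (1/2:ℝ)^k * ((q k : R) : X → ℝ) x,
    hR.series_mem _ (ε^2) (fun k => (q k).2) hq_nonneg hq_le⟩ with hgdef
  set c : ℝ := φ g with hc
  -- lower bound on c
  have hcge : 2 * ε^2 ≤ c := by
    have hpart : ∀ K : ℕ, ∑ k ∈ Finset.range K, (1/2:ℝ)^k * ε^2 ≤ c := by
      intro K
      set P : R := ∑ k ∈ Finset.range K, cR hR ((1/2:ℝ)^k) * q k with hP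
      have hPcoe : ∀ x, ((P : R) : X → ℝ) x = ∑ k ∈ Finset.range K, (1/2:ℝ)^k * ((q k : R) : X → ℝ) x := by
        intro x
        have : ((P : R) : X → ℝ) x = ((Pi.evalRingHom (fun _ : X => ℝ) x).comp R.subtype) P := rfl
        rw [this, hP, map_sum]
        rfl
      have hφP : φ P = ∑ k ∈ Finset.range K, (1/2:ℝ)^k * ε^2 := by
        rw [hP, map_sum]
        congr 1
        ext k
        rw [map_mul, φ_const, hφq]
      have hle : φ P ≤ φ g := by
        apply φ_mono hR φ
        intro x
        rw [hPcoe]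
        exact Summable.sum_le_tsum (Finset.range K)
          (fun k _ => mul_nonneg (by positivity) (hq_nonneg k x)) (hsum x)
      rw [hφP] at hle
      exact hle
    have hlim : Tendsto (fun K => ∑ k ∈ Finset.range K, (1/2:ℝ)^k * ε^2) atTop
        (𝓝 (2 * ε^2)) := by
      have h1 : HasSum (fun k => (1/2:ℝ)^k * ε^2) (2 * ε^2) := by
        have := hasSum_geometric_of_lt_one (r := (1/2:ℝ)) (by norm_num) (by norm_num)
        rw [show ((1:ℝ) - 1/2)⁻¹ = 2 by norm_num] at this
        simpa using this.mul_right (ε^2)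
      exact h1.tendsto_sum_nat
    exact le_of_tendsto hlim (Eventually.of_forall hpart)
  -- g never equals c
  have hne : ∀ x, ((g - cR hR c : R) : X → ℝ) x ≠ 0 := by
    intro x
    have hgx : ((g : R) : X → ℝ) x < c := by
      obtain ⟨k0, hk0⟩ := (Metric.tendsto_atTop.mp (hq_tendsto x) (ε^2/2) (by positivity)) 
      have hk0' : ((q k0 : R) : X → ℝ) x < ε^2/2 := by
        have := hk0 k0 le_rfl
        rw [Real.dist_eq, abs_sub_lt_iff] at this
        linarith [this.1]
      have hbound : ((g : R) : X → ℝ) x ≤ 2 * ε^2 - (1/2:ℝ)^k0 * (ε^2/2) := by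
        have hterm : ∀ k, (1/2:ℝ)^k * ((q k : R) : X → ℝ) x ≤
            (1/2:ℝ)^k * ε^2 - (if k = k0 then (1/2:ℝ)^k0 * (ε^2/2) else 0) := by
          intro k
          by_cases hk : k = k0
          · subst hk
            rw [if_pos rfl]
            have h := mul_le_mul_of_nonneg_left hk0'.le
              (pow_nonneg (by norm_num : (0:ℝ) ≤ 1/2) k)
            nlinarith [pow_nonneg (by norm_num : (0:ℝ) ≤ 1/2) k]
          · simp only [if_neg hk, sub_zero]
            exact mul_le_mul_of_nonneg_left (hq_le k x) (by positivity)
        have hsumb : Summable (fun k => (1/2:ℝ)^k * ε^2 - (if k = k0 then (1/2:ℝ)^k0 * (ε^2/2) else 0)) := by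
          apply Summable.sub
          · exact (summable_geometric_of_lt_one (by norm_num) (by norm_num)).mul_right _
          · exact summable_of_ne_finset_zero (s := {k0}) (fun k hk => by
              simp only [Finset.mem_singleton] at hk
              simp [hk])
        have := Summable.tsum_le_tsum hterm (hsum x) hsumb
        have htsum : (∑' k, ((1/2:ℝ)^k * ε^2 - (if k = k0 then (1/2:ℝ)^k0 * (ε^2/2) else 0)))
            = 2 * ε^2 - (1/2:ℝ)^k0 * (ε^2/2) := by
          rw [Summable.tsum_sub ((summable_geometric_of_lt_one (by norm_num) (by norm_num)).mul_right _)
            (summable_of_ne_finset_zero (s := {k0}) (fun k hk => by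
              simp only [Finset.mem_singleton] at hk
              simp [hk]))]
          congr 1
          · rw [tsum_mul_right, tsum_geometric_of_lt_one (by norm_num) (by norm_num)]
            norm_num
          · exact tsum_ite_eq k0 _
        rw [htsum] at this
        exact this
      have : (0:ℝ) < (1/2:ℝ)^k0 * (ε^2/2) := by positivity
      linarith
    have : ((g - cR hR c : R) : X → ℝ) x = ((g : R) : X → ℝ) x - c := rfl
    rw [this]
    linarith
  obtain ⟨w, hw, hww⟩ := hR.inv_mem _ (g - cR hR c).2 hne
  have h1 : (g - cR hR c) * ⟨w, hw⟩ = 1 := Subtype.ext (by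
    ext x
    simpa using congrFun hww x)
  have h2 : φ ((g - cR hR c) * ⟨w, hw⟩) = 0 := by
    rw [map_mul, map_sub, φ_const, ← hc, sub_self, zero_mul]
  rw [h1, map_one] at h2
  exact one_ne_zero h2


lemma summable_geo_mul (C : ℝ) : Summable (fun k : ℕ => (1/2:ℝ)^k * C) :=
  (summable_geometric_of_lt_one (by norm_num) (by norm_num)).mul_right _

lemma nice_CFun : Nice (CFun X) where
  const_mem := fun r => continuous_const
  abs_mem := fun f hf => (hf : Continuous f).abs
  sqrt_mem := fun f hf h0 =>
    ⟨fun x => Real.sqrt (f x), Real.continuous_sqrt.comp hf,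
      funext fun x => Real.mul_self_sqrt (h0 x)⟩
  series_mem := by
    intro w C hw h0 hle
    exact continuous_tsum (u := fun k => (1/2:ℝ)^k * max C 0)
      (fun k => continuous_const.mul (hw k))
      (summable_geo_mul _)
      (fun k x => by
        rw [Real.norm_eq_abs, abs_of_nonneg (mul_nonneg (by positivity) (h0 k x))]
        exact mul_le_mul_of_nonneg_left ((hle k x).trans (le_max_left _ _)) (by positivity))
  inv_mem := by
    intro f hf hne
    exact ⟨fun x => (f x)⁻¹, (hf : Continuous f).inv₀ hne,
      funext fun x => mul_inv_cancel₀ (hne x)⟩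

lemma B1.comp {F : ℝ → ℝ} (hF : Continuous F) {f : X → ℝ} (hf : f ∈ B1 X) :
    (fun x => F (f x)) ∈ B1 X := by
  obtain ⟨u, hu⟩ := hf
  exact ⟨fun n => ⟨fun x => F (u n x), hF.comp (u n).continuous⟩,
    fun x => (hF.tendsto _).comp (hu x)⟩

lemma nice_B1 : Nice (B1 X) where
  const_mem := fun r => ⟨fun _ => ContinuousMap.const X r, fun _ => tendsto_const_nhds⟩
  abs_mem := fun f hf => B1.comp continuous_abs hf
  sqrt_mem := by
    intro f hf h0
    exact ⟨fun x => Real.sqrt (f x), B1.comp Real.continuous_sqrt hf,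
      funext fun x => Real.mul_self_sqrt (h0 x)⟩
  inv_mem := by
    intro f hf hne
    obtain ⟨u, hu⟩ := hf
    refine ⟨fun x => (f x)⁻¹, ⟨fun n => ⟨fun x => u n x / ((u n x)^2 + 1/(n+1)),
      ((u n).continuous.div (((u n).continuous.pow 2).add continuous_const)
        (fun x => by simp only [Pi.add_apply, Pi.pow_apply]; positivity))⟩, ?_⟩,
      funext fun x => mul_inv_cancel₀ (hne x)⟩
    intro x
    have h1 : Tendsto (fun n => u n x) atTop (𝓝 (f x)) := hu x
    have hd : Tendsto (fun n : ℕ => (u n x)^2 + 1/(n+1:ℝ)) atTop (𝓝 ((f x)^2 + 0)) :=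
      (h1.pow 2).add tendsto_one_div_add_atTop_nhds_zero_nat
    have h2 := h1.div hd (by simpa using pow_ne_zero 2 (hne x))
    have h3 : f x / ((f x)^2 + 0) = (f x)⁻¹ := by
      rw [add_zero, sq]
      field_simp
    rw [h3] at h2
    exact h2
  series_mem := by
    intro w C hw h0 hle
    choose u hu using hw
    -- clamped approximants
    set cl : ℝ → ℝ := fun t => max 0 (min t C) with hcl
    have hcl_cont : Continuous cl := continuous_const.max (continuous_id.min continuous_const)
    have hcl_mem : ∀ t, 0 ≤ cl t ∧ cl t ≤ max C 0 := by
      intro t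
      exact ⟨le_max_left _ _,
        max_le (le_max_right C 0) ((min_le_right t C).trans (le_max_left C 0))⟩
    have hcl_w : ∀ k x, cl (w k x) = w k x := by
      intro k x
      rw [hcl]
      simp only [min_eq_left (hle k x), max_eq_right (h0 k x)]
    refine ⟨fun m => ⟨fun x => ∑ k ∈ Finset.range (m+1), (1/2:ℝ)^k * cl (u k m x), ?_⟩, ?_⟩
    · exact continuous_finset_sum _ fun k _ =>
        continuous_const.mul (hcl_cont.comp (u k m).continuous)
    intro x
    set F : ℕ → ℕ → ℝ := fun m k => if k ≤ m then (1/2:ℝ)^k * cl (u k m x) else 0 with hF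
    have key := tendsto_tsum_of_dominated_convergence (𝓕 := atTop) (f := F)
      (g := fun k => (1/2:ℝ)^k * w k x) (bound := fun k => (1/2:ℝ)^k * max C 0)
      (summable_geo_mul _) ?_ ?_
    · have heq : ∀ m, (∑' k, F m k) = ∑ k ∈ Finset.range (m+1), (1/2:ℝ)^k * cl (u k m x) := by
        intro m
        rw [tsum_eq_sum (s := Finset.range (m+1)) (fun k hk => by
          rw [hF]
          simp only [Finset.mem_range, not_lt] at hk
          exact if_neg (by omega))]
        apply Finset.sum_congr rfl
        intro k hk
        rw [hF]
        simp only [Finset.mem_range] at hk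
        exact if_pos (by omega)
      simp only [heq] at key
      exact key
    · intro k
      have h1 : Tendsto (fun m => (1/2:ℝ)^k * cl (u k m x)) atTop (𝓝 ((1/2:ℝ)^k * w k x)) := by
        have := (hcl_cont.tendsto _).comp (hu k x)
        rw [hcl_w k x] at this
        exact this.const_mul _
      apply h1.congr'
      filter_upwards [eventually_ge_atTop k] with m hm
      show (1/2:ℝ)^k * cl (u k m x) = F m k
      exact (if_pos hm).symm
    · filter_upwards with m
      intro k
      show ‖if k ≤ m then (1/2:ℝ)^k * cl (u k m x) else 0‖ ≤ (1/2:ℝ)^k * max C 0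
      split
      · rw [Real.norm_eq_abs, abs_of_nonneg (mul_nonneg (by positivity) (hcl_mem _).1)]
        exact mul_le_mul_of_nonneg_left (hcl_mem _).2 (by positivity)
      · rw [norm_zero]
        positivity





lemma B1.exists_seq (f : B1 X) : ∃ u : ℕ → CFun X,
    ∀ x, Tendsto (fun n => ((u n : X → ℝ)) x) atTop (𝓝 ((f : X → ℝ) x)) := by
  obtain ⟨u, hu⟩ := f.2
  exact ⟨fun n => ⟨u n, (u n).continuous⟩, hu⟩

section Extend

variable (φ : CFun X →+* ℝ)

lemma exists_lim (f : B1 X) : ∃ r : ℝ, ∀ u : ℕ → CFun X,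
    (∀ x, Tendsto (fun n => ((u n : X → ℝ)) x) atTop (𝓝 ((f : X → ℝ) x))) →
    Tendsto (fun n => φ (u n)) atTop (𝓝 r) := by
  obtain ⟨u0, hu0⟩ := B1.exists_seq f
  have hC : CauchySeq (fun n => φ (u0 n)) := by
    rw [Metric.cauchySeq_iff]
    by_contra hcon
    push_neg at hcon
    obtain ⟨ε, hε, hcon⟩ := hcon
    choose i hi j hj hd using hcon
    have hkey := key nice_CFun φ (fun N => u0 (i N) - u0 (j N)) ?_
    · rw [Metric.tendsto_atTop] at hkey
      obtain ⟨N, hN⟩ := hkey ε hε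
      have h1 := hN N le_rfl
      have h2 := hd N
      rw [Real.dist_eq, sub_zero, map_sub] at h1
      rw [Real.dist_eq] at h2
      linarith
    · intro x
      have h1 : Tendsto (fun N => ((u0 (i N) : X → ℝ)) x) atTop (𝓝 ((f : X → ℝ) x)) :=
        (hu0 x).comp (tendsto_atTop_mono hi tendsto_id)
      have h2 : Tendsto (fun N => ((u0 (j N) : X → ℝ)) x) atTop (𝓝 ((f : X → ℝ) x)) :=
        (hu0 x).comp (tendsto_atTop_mono hj tendsto_id)
      have h3 := h1.sub h2
      rw [sub_self] at h3
      exact h3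
  obtain ⟨r, hr⟩ := cauchySeq_tendsto_of_complete hC
  refine ⟨r, fun u hu => ?_⟩
  have hdiff := key nice_CFun φ (fun n => u n - u0 n) (fun x => by
    have := (hu x).sub (hu0 x)
    rw [sub_self] at this
    exact this)
  have heq : (fun n => φ (u n)) = fun n => φ (u n - u0 n) + φ (u0 n) := by
    ext n; rw [map_sub]; ring
  rw [heq]
  simpa using hdiff.add hr

noncomputable def ext0 (f : B1 X) : ℝ := Classical.choose (exists_lim φ f)

lemma ext0_spec (f : B1 X) (u : ℕ → CFun X)
    (hu : ∀ x, Tendsto (fun n => ((u n : X → ℝ)) x) atTop (𝓝 ((f : X → ℝ) x))) :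
    Tendsto (fun n => φ (u n)) atTop (𝓝 (ext0 φ f)) :=
  Classical.choose_spec (exists_lim φ f) u hu

noncomputable def extB : B1 X →+* ℝ where
  toFun := ext0 φ
  map_one' := tendsto_nhds_unique
    (ext0_spec φ 1 (fun _ => 1) (fun _ => tendsto_const_nhds)) (by simpa using tendsto_const_nhds)
  map_zero' := tendsto_nhds_unique
    (ext0_spec φ 0 (fun _ => 0) (fun _ => tendsto_const_nhds)) (by simpa using tendsto_const_nhds)
  map_mul' := by
    intro f g
    obtain ⟨uf, huf⟩ := B1.exists_seq f
    obtain ⟨ug, hug⟩ := B1.exists_seq g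
    have h1 := ext0_spec φ (f * g) (fun n => uf n * ug n) (fun x => by
      exact (huf x).mul (hug x))
    have h2 : Tendsto (fun n => φ (uf n * ug n)) atTop (𝓝 (ext0 φ f * ext0 φ g)) := by
      simp only [map_mul]
      exact (ext0_spec φ f uf huf).mul (ext0_spec φ g ug hug)
    exact tendsto_nhds_unique h1 h2
  map_add' := by
    intro f g
    obtain ⟨uf, huf⟩ := B1.exists_seq f
    obtain ⟨ug, hug⟩ := B1.exists_seq g
    have h1 := ext0_spec φ (f + g) (fun n => uf n + ug n) (fun x => by
      exact (huf x).add (hug x))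
    have h2 : Tendsto (fun n => φ (uf n + ug n)) atTop (𝓝 (ext0 φ f + ext0 φ g)) := by
      simp only [map_add]
      exact (ext0_spec φ f uf huf).add (ext0_spec φ g ug hug)
    exact tendsto_nhds_unique h1 h2

lemma extB_incl (f : CFun X) : extB φ (inclB X f) = φ f :=
  tendsto_nhds_unique
    (ext0_spec φ (inclB X f) (fun _ => f) (fun _ => tendsto_const_nhds)) tendsto_const_nhds

lemma extB_comp_incl : (extB φ).comp (inclB X) = φ :=
  RingHom.ext fun f => extB_incl φ f

lemma ker_extB_carrier {M : Ideal (CFun X)} (hker : RingHom.ker φ = M) :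
    ((RingHom.ker (extB φ) : Ideal (B1 X)) : Set (B1 X)) = idealB M := by
  ext f
  constructor
  · intro hf
    have hf0 : extB φ f = 0 := RingHom.mem_ker.mp hf
    obtain ⟨u, hu⟩ := B1.exists_seq f
    refine ⟨fun n => u n - cR nice_CFun (φ (u n)), fun n => ?_, fun x => ?_⟩
    · rw [← hker, RingHom.mem_ker, map_sub, φ_const, sub_self]
    · have h1 : Tendsto (fun n => φ (u n)) atTop (𝓝 0) := by
        have := ext0_spec φ f u hu
        rwa [show ext0 φ f = extB φ f from rfl, hf0] at this
      have h2 := (hu x).sub h1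
      rw [sub_zero] at h2
      exact h2
  · rintro ⟨u, hmem, hu⟩
    have h1 := ext0_spec φ f u hu
    have h2 : ∀ n, φ (u n) = 0 := fun n => by
      have := hmem n
      rw [← hker, RingHom.mem_ker] at this
      exact this
    simp only [h2] at h1
    have h3 := tendsto_nhds_unique h1 tendsto_const_nhds
    exact RingHom.mem_ker.mpr (show extB φ f = 0 from h3)

end Extend

lemma surj_toReal {R : Subring (X → ℝ)} (hR : Nice R) (ψ : R →+* ℝ) :
    Function.Surjective ψ := fun r => ⟨cR hR r, φ_const hR ψ r⟩

lemma isRealMax_of_ker (φ : CFun X →+* ℝ) : IsRealMax (RingHom.ker φ) :=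
  ⟨RingHom.ker_isMaximal_of_surjective φ (surj_toReal nice_CFun φ),
    ⟨RingHom.quotientKerEquivOfSurjective (surj_toReal nice_CFun φ)⟩⟩

lemma isRealMaxB_of_ker (ψ : B1 X →+* ℝ) : IsRealMaxB (RingHom.ker ψ) :=
  ⟨RingHom.ker_isMaximal_of_surjective ψ (surj_toReal nice_B1 ψ),
    ⟨RingHom.quotientKerEquivOfSurjective (surj_toReal nice_B1 ψ)⟩⟩

noncomputable def homOf {M : Ideal (CFun X)} (hM : IsRealMax M) : CFun X →+* ℝ :=
  (Classical.choice hM.2).toRingHom.comp (Ideal.Quotient.mk M)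

lemma ker_homOf {M : Ideal (CFun X)} (hM : IsRealMax M) : RingHom.ker (homOf hM) = M := by
  ext f
  rw [RingHom.mem_ker]
  show (Classical.choice hM.2) (Ideal.Quotient.mk M f) = 0 ↔ _
  rw [map_eq_zero_iff _ (RingEquiv.injective _)]
  exact Ideal.Quotient.eq_zero_iff_mem

noncomputable def homOfB {N : Ideal (B1 X)} (hN : IsRealMaxB N) : B1 X →+* ℝ :=
  (Classical.choice hN.2).toRingHom.comp (Ideal.Quotient.mk N)

lemma ker_homOfB {N : Ideal (B1 X)} (hN : IsRealMaxB N) : RingHom.ker (homOfB hN) = N := by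
  ext f
  rw [RingHom.mem_ker]
  show (Classical.choice hN.2) (Ideal.Quotient.mk N f) = 0 ↔ _
  rw [map_eq_zero_iff _ (RingEquiv.injective _)]
  exact Ideal.Quotient.eq_zero_iff_mem

lemma hom_ext_ker {R : Subring (X → ℝ)} (hR : Nice R) {ψ₁ ψ₂ : R →+* ℝ}
    (h : RingHom.ker ψ₁ = RingHom.ker ψ₂) : ψ₁ = ψ₂ := by
  ext f
  have h1 : f - cR hR (ψ₁ f) ∈ RingHom.ker ψ₁ := by
    rw [RingHom.mem_ker, map_sub, φ_const, sub_self]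
  rw [h, RingHom.mem_ker, map_sub, φ_const] at h1
  linarith [sub_eq_zero.mp h1]

noncomputable def fwd (M : {M : Ideal (CFun X) // IsRealMax M}) :
    {N : Ideal (B1 X) // IsRealMaxB N} :=
  ⟨RingHom.ker (extB (homOf M.2)), isRealMaxB_of_ker _⟩

noncomputable def bwd (N : {N : Ideal (B1 X) // IsRealMaxB N}) :
    {M : Ideal (CFun X) // IsRealMax M} :=
  ⟨RingHom.ker ((homOfB N.2).comp (inclB X)), isRealMax_of_ker _⟩

lemma extB_homOfB {N : Ideal (B1 X)} (hN : IsRealMaxB N) (φ : CFun X →+* ℝ)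
    (hφ : φ = (homOfB hN).comp (inclB X)) : extB φ = homOfB hN := by
  ext f
  obtain ⟨u, hu⟩ := B1.exists_seq f
  have h1 := ext0_spec φ f u hu
  have h2 : Tendsto (fun n => φ (u n)) atTop (𝓝 (homOfB hN f)) := by
    have hkey := key nice_B1 (homOfB hN) (fun n => inclB X (u n) - f) (fun x => by
      have := (hu x).sub (tendsto_const_nhds (x := (f : X → ℝ) x))
      rw [sub_self] at this
      exact this)
    have heq : (fun n => φ (u n)) =
        fun n => homOfB hN (inclB X (u n) - f) + homOfB hN f := by
      ext n
      rw [map_sub, hφ]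
      simp [RingHom.comp_apply]
    rw [heq]
    simpa using hkey.add (tendsto_const_nhds (x := homOfB hN f))
  exact tendsto_nhds_unique h1 h2

lemma left_inv : Function.LeftInverse (bwd (X := X)) fwd := by
  intro M
  apply Subtype.ext
  show RingHom.ker ((homOfB (fwd M).2).comp (inclB X)) = M.1
  have h1 : homOfB (fwd M).2 = extB (homOf M.2) := by
    apply hom_ext_ker nice_B1
    rw [ker_homOfB]
    rfl
  rw [h1, extB_comp_incl, ker_homOf]

lemma right_inv : Function.RightInverse (bwd (X := X)) fwd := by
  intro N
  apply Subtype.ext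
  show RingHom.ker (extB (homOf (bwd N).2)) = N.1
  have h1 : homOf (bwd N).2 = (homOfB N.2).comp (inclB X) := by
    apply hom_ext_ker nice_CFun
    rw [ker_homOf]
    rfl
  rw [extB_homOfB N.2 _ h1, ker_homOfB]

end RealMaxProof

theorem real_maximal_bijection {X : Type*} [TopologicalSpace X] :
    ∃ e : {M : Ideal (CFun X) // IsRealMax M} ≃ {N : Ideal (B1 X) // IsRealMaxB N},
      ∀ M : {M : Ideal (CFun X) // IsRealMax M},
        (↑(e M).1 : Set (B1 X)) = idealB M.1 := by
  refine ⟨⟨RealMaxProof.fwd, RealMaxProof.bwd, RealMaxProof.left_inv, RealMaxProof.right_inv⟩,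
    fun M => ?_⟩
  exact RealMaxProof.ker_extB_carrier (RealMaxProof.homOf M.2) (RealMaxProof.ker_homOf M.2)
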